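/- For any n×n real matrix A and any natural number m, tr(A^(2m)) ≤ tr((A·Aᵀ)^m). -/

import Mathlib

open Matrix List

namespace TraceWord

variable {n : ℕ}

def f (A : Matrix (Fin n) (Fin n) ℝ) (b : Bool) : Matrix (Fin n) (Fin n) ℝ :=
  if b then A else Aᵀ

def W (A : Matrix (Fin n) (Fin n) ℝ) (l : List Bool) : Matrix (Fin n) (Fin n) ℝ :=
  (l.map (f A)).prod

def J (x y : Bool) : ℕ := if x = y then 1 else 0

def Dint : List Bool → ℕ
  | [] => 0
  | [_] => 0
  | a :: b :: t => J a b + Dint (b :: t)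

def lastB (l : List Bool) : Bool := l.reverse.headI

def D (l : List Bool) : ℕ := Dint (l ++ [l.headI])

def mirror (l : List Bool) : List Bool := (l.map not).reverse

lemma J_comm (x y : Bool) : J x y = J y x := by cases x <;> cases y <;> rfl

lemma J_not_right (x : Bool) : J x (!x) = 0 := by cases x <;> rfl

lemma J_not_left (x : Bool) : J (!x) x = 0 := by cases x <;> rfl

lemma J_not_not (x y : Bool) : J (!x) (!y) = J x y := by cases x <;> cases y <;> rfl

lemma W_nil (A : Matrix (Fin n) (Fin n) ℝ) : W A [] = 1 := rfl

lemma W_append (A : Matrix (Fin n) (Fin n) ℝ) (u v : List Bool) :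
    W A (u ++ v) = W A u * W A v := by
  simp [W, List.map_append, List.prod_append]

lemma f_not (A : Matrix (Fin n) (Fin n) ℝ) (b : Bool) : f A (!b) = (f A b)ᵀ := by
  cases b <;> simp [f]

lemma W_mirror (A : Matrix (Fin n) (Fin n) ℝ) (u : List Bool) :
    W A (mirror u) = (W A u)ᵀ := by
  unfold W mirror
  rw [Matrix.transpose_list_prod, List.map_reverse, List.map_map, List.map_map]
  congr 2
  apply List.map_congr_left
  intro b _
  simp [Function.comp, f_not]

lemma headI_append (u v : List Bool) (hu : u ≠ []) : (u ++ v).headI = u.headI := by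
  cases u with
  | nil => simp at hu
  | cons a t => rfl

lemma lastB_append (u v : List Bool) (hv : v ≠ []) : lastB (u ++ v) = lastB v := by
  unfold lastB
  rw [List.reverse_append]
  rw [headI_append]
  simpa using hv

lemma lastB_singleton_append (u : List Bool) (x : Bool) : lastB (u ++ [x]) = x := by
  rw [lastB_append u [x] (by simp)]; rfl

lemma headI_map_not (l : List Bool) (hl : l ≠ []) : (l.map not).headI = !l.headI := by
  cases l with
  | nil => simp at hl
  | cons a t => rfl

lemma mirror_ne_nil (u : List Bool) (hu : u ≠ []) : mirror u ≠ [] := by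
  simp [mirror]; simpa using hu

lemma length_mirror (u : List Bool) : (mirror u).length = u.length := by simp [mirror]

lemma headI_mirror (u : List Bool) (hu : u ≠ []) : (mirror u).headI = !(lastB u) := by
  unfold mirror lastB
  rw [← List.map_reverse, headI_map_not _ (by simpa using hu)]

lemma lastB_mirror (u : List Bool) (hu : u ≠ []) : lastB (mirror u) = !u.headI := by
  unfold mirror lastB
  rw [List.reverse_reverse, headI_map_not _ hu]

lemma lastB_cons (a : Bool) (l : List Bool) (hl : l ≠ []) : lastB (a :: l) = lastB l := by
  have : a :: l = [a] ++ l := rfl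
  rw [this, lastB_append _ _ hl]

lemma Dint_cons_cons (a b : Bool) (t : List Bool) :
    Dint (a :: b :: t) = J a b + Dint (b :: t) := rfl

lemma Dint_append : ∀ (u v : List Bool), u ≠ [] → v ≠ [] →
    Dint (u ++ v) = Dint u + Dint v + J (lastB u) v.headI
  | [], _, hu, _ => by simp at hu
  | [a], v, _, hv => by
    cases v with
    | nil => simp at hv
    | cons b t =>
      show Dint (a :: b :: t) = _
      rw [Dint_cons_cons]
      have : lastB [a] = a := rfl
      rw [this]
      show J a b + Dint (b :: t) = 0 + Dint (b :: t) + J a (b :: t).headI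
      simp [List.headI]
      ring
  | a :: b :: t, v, _, hv => by
    have ih := Dint_append (b :: t) v (by simp) hv
    show Dint (a :: b :: (t ++ v)) = _
    rw [Dint_cons_cons]
    have h2 : b :: (t ++ v) = (b :: t) ++ v := rfl
    rw [h2, ih, Dint_cons_cons, lastB_cons a (b :: t) (by simp)]
    ring

lemma Dint_prefix_le (u v : List Bool) : Dint u ≤ Dint (u ++ v) := by
  rcases eq_or_ne u [] with h | h
  · simp [h, Dint]
  rcases eq_or_ne v [] with h2 | h2
  · simp [h2]
  rw [Dint_append u v h h2]
  omega

lemma Dint_map_not : ∀ (l : List Bool), Dint (l.map not) = Dint l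
  | [] => rfl
  | [_] => rfl
  | a :: b :: t => by
    have ih := Dint_map_not (b :: t)
    have h1 : (a :: b :: t).map not = (!a) :: (!b) :: t.map not := rfl
    have h2 : (b :: t).map not = (!b) :: t.map not := rfl
    rw [h1, Dint_cons_cons, ← h2, ih, Dint_cons_cons, J_not_not]

lemma Dint_reverse : ∀ (l : List Bool), Dint l.reverse = Dint l
  | [] => rfl
  | [_] => rfl
  | a :: b :: t => by
    have ih := Dint_reverse (b :: t)
    have h1 : (a :: b :: t).reverse = (b :: t).reverse ++ [a] := by simp
    rw [h1, Dint_append _ _ (by simp) (by simp)]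
    have h2 : lastB (b :: t).reverse = b := by
      unfold lastB
      rw [List.reverse_reverse]
      rfl
    rw [ih, h2, Dint_cons_cons]
    show Dint (b :: t) + 0 + J b a = J a b + Dint (b :: t)
    rw [J_comm]
    ring

lemma Dint_mirror (u : List Bool) : Dint (mirror u) = Dint u := by
  rw [mirror, Dint_reverse, Dint_map_not]

lemma D_append (u v : List Bool) (hu : u ≠ []) (hv : v ≠ []) :
    D (u ++ v) = Dint u + Dint v + J (lastB u) v.headI + J (lastB v) u.headI := by
  unfold D
  rw [headI_append u v hu, List.append_assoc,
      Dint_append u (v ++ [u.headI]) hu (by simp),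
      Dint_append v [u.headI] hv (by simp),
      headI_append v [u.headI] hv]
  show _ = _
  have : Dint [u.headI] = 0 := rfl
  have h2 : ([u.headI] : List Bool).headI = u.headI := rfl
  rw [this, h2]
  ring

lemma D_swap (u v : List Bool) (hu : u ≠ []) (hv : v ≠ []) :
    D (u ++ v) = D (v ++ u) := by
  rw [D_append u v hu hv, D_append v u hv hu]
  ring

lemma D_mirror_right (u : List Bool) (hu : u ≠ []) :
    D (u ++ mirror u) = 2 * Dint u := by
  rw [D_append u (mirror u) hu (mirror_ne_nil u hu), Dint_mirror,
      headI_mirror u hu, lastB_mirror u hu, J_not_right, J_not_left]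
  ring

lemma D_mirror_left (v : List Bool) (hv : v ≠ []) :
    D (mirror v ++ v) = 2 * Dint v := by
  rw [D_append (mirror v) v (mirror_ne_nil v hv) hv, Dint_mirror,
      headI_mirror v hv, lastB_mirror v hv, J_not_right, J_not_left]
  ring

lemma Dint_one_le : ∀ (l : List Bool), 1 ≤ Dint l → ∃ p x q, l = p ++ x :: x :: q
  | [], h => by simp [Dint] at h
  | [_], h => by simp [Dint] at h
  | a :: b :: t, h => by
    by_cases hab : a = b
    · exact ⟨[], a, t, by simp [hab]⟩
    · have : J a b = 0 := by simp [J, hab]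
      rw [Dint_cons_cons, this] at h
      obtain ⟨p, x, q, hp⟩ := Dint_one_le (b :: t) (by omega)
      exact ⟨a :: p, x, q, by simp [hp]⟩

lemma trace_eq_sum_pairs (X Y : Matrix (Fin n) (Fin n) ℝ) :
    Matrix.trace (X * Y) = ∑ p : Fin n × Fin n, X p.1 p.2 * Y p.2 p.1 := by
  rw [Fintype.sum_prod_type]
  simp [Matrix.trace, Matrix.diag, Matrix.mul_apply]

lemma trace_mul_transpose_self (X : Matrix (Fin n) (Fin n) ℝ) :
    Matrix.trace (X * Xᵀ) = ∑ p : Fin n × Fin n, (X p.1 p.2) ^ 2 := by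
  rw [trace_eq_sum_pairs]
  congr 1; funext p; simp [Matrix.transpose_apply, sq]

lemma trace_transpose_mul_self (Y : Matrix (Fin n) (Fin n) ℝ) :
    Matrix.trace (Yᵀ * Y) = ∑ p : Fin n × Fin n, (Y p.2 p.1) ^ 2 := by
  rw [trace_eq_sum_pairs]
  congr 1; funext p; simp [Matrix.transpose_apply, sq]

lemma trace_mul_transpose_self_nonneg (X : Matrix (Fin n) (Fin n) ℝ) :
    0 ≤ Matrix.trace (X * Xᵀ) := by
  rw [trace_mul_transpose_self]
  exact Finset.sum_nonneg fun p _ => sq_nonneg _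

lemma trace_CS (X Y : Matrix (Fin n) (Fin n) ℝ) :
    (Matrix.trace (X * Y)) ^ 2 ≤ Matrix.trace (X * Xᵀ) * Matrix.trace (Yᵀ * Y) := by
  rw [trace_eq_sum_pairs, trace_mul_transpose_self, trace_transpose_mul_self]
  exact Finset.sum_mul_sq_le_sq_mul_sq _ _ _

lemma trace_pow_mul_comm (X Y : Matrix (Fin n) (Fin n) ℝ) (k : ℕ) :
    Matrix.trace ((X * Y) ^ k) = Matrix.trace ((Y * X) ^ k) := by
  cases k with
  | zero => rfl
  | succ s =>
    have hsc : SemiconjBy X (Y * X) (X * Y) := by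
      unfold SemiconjBy; rw [mul_assoc]
    have h := (hsc.pow_right s).eq
    calc Matrix.trace ((X * Y) ^ (s + 1))
        = Matrix.trace ((X * Y) ^ s * X * Y) := by rw [pow_succ, mul_assoc]
      _ = Matrix.trace (X * (Y * X) ^ s * Y) := by rw [← h]
      _ = Matrix.trace (((Y * X) ^ s * Y) * X) := by
          rw [mul_assoc, Matrix.trace_mul_comm]
      _ = Matrix.trace ((Y * X) ^ (s + 1)) := by rw [pow_succ, mul_assoc]

lemma trace_alt_pow_nonneg (A : Matrix (Fin n) (Fin n) ℝ) (m : ℕ) :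
    0 ≤ Matrix.trace ((A * Aᵀ) ^ m) := by
  have hSt : (A * Aᵀ)ᵀ = A * Aᵀ := by
    rw [Matrix.transpose_mul, Matrix.transpose_transpose]
  rcases Nat.even_or_odd m with ⟨k, hk⟩ | ⟨k, hk⟩
  · have h : (A * Aᵀ) ^ m = (A * Aᵀ) ^ k * ((A * Aᵀ) ^ k)ᵀ := by
      rw [Matrix.transpose_pow, hSt, ← pow_add, ← hk]
    rw [h]; exact trace_mul_transpose_self_nonneg _
  · have h : (A * Aᵀ) ^ m = ((A * Aᵀ) ^ k * A) * ((A * Aᵀ) ^ k * A)ᵀ := by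
      rw [Matrix.transpose_mul, Matrix.transpose_pow, hSt, hk,
          show 2 * k + 1 = k + (1 + k) by ring, pow_add, pow_add, pow_one]
      noncomm_ring
    rw [h]; exact trace_mul_transpose_self_nonneg _

lemma W_cons (A : Matrix (Fin n) (Fin n) ℝ) (x : Bool) (l : List Bool) :
    W A (x :: l) = f A x * W A l := by simp [W]

lemma W_alt : ∀ (l : List Bool) (A : Matrix (Fin n) (Fin n) ℝ) (k : ℕ),
    l.length = 2 * k → Dint l = 0 → W A l = (f A l.headI * f A (!l.headI)) ^ k
  | [], A, k, h, _ => by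
    have hk : k = 0 := by simp at h; omega
    subst hk; simp [W]
  | [_], A, k, h, _ => by
    exfalso; simp at h; omega
  | a :: b :: t, A, k, h, hD => by
    cases k with
    | zero => exfalso; simp at h
    | succ k' =>
      rw [Dint_cons_cons] at hD
      have hJ : J a b = 0 := by omega
      have hb : b = !a := by cases a <;> cases b <;> simp_all [J]
      have hDt : Dint (b :: t) = 0 := by omega
      cases t with
      | nil =>
        have hk0 : k' = 0 := by simp at h; omega
        subst hk0 hb
        show W A [a, !a] = (f A a * f A (!a)) ^ 1
        rw [W_cons, W_cons, W_nil, pow_one, mul_one]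
      | cons c t' =>
        rw [Dint_cons_cons] at hDt
        have hc : c = a := by
          subst hb; cases a <;> cases c <;> simp_all [J]
        have ih := W_alt (c :: t') A k' (by simp at h ⊢; omega) (by omega)
        have hhead : (c :: t').headI = a := by rw [hc]; rfl
        rw [hhead] at ih
        show W A (a :: b :: c :: t') = (f A a * f A (!a)) ^ (k' + 1)
        rw [W_cons, W_cons, ih, hb, pow_succ', ← mul_assoc]

lemma exists_ofFn {N : ℕ} (l : List Bool) (h : l.length = N) :
    ∃ g : Fin N → Bool, List.ofFn g = l := by
  subst h
  exact ⟨l.get, List.ofFn_get l⟩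

theorem main (A : Matrix (Fin n) (Fin n) ℝ) (m : ℕ) (hm : 0 < m) :
    Matrix.trace (A ^ (2 * m)) ≤ Matrix.trace ((A * Aᵀ) ^ m) := by
  classical
  set N := 2 * m with hN
  -- the maximum of traces over all words of length N
  obtain ⟨gmax, -, hgmax⟩ := Finset.exists_max_image (Finset.univ : Finset (Fin N → Bool))
    (fun g => Matrix.trace (W A (List.ofFn g))) ⟨fun _ => true, Finset.mem_univ _⟩
  set M := Matrix.trace (W A (List.ofFn gmax)) with hM
  have hle : ∀ l : List Bool, l.length = N → Matrix.trace (W A l) ≤ M := by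
    intro l hl
    obtain ⟨g, rfl⟩ := exists_ofFn l hl
    exact hgmax g (Finset.mem_univ g)
  -- trace of A^N is among the words
  have hrep : Matrix.trace (A ^ N) ≤ M := by
    have h1 : W A (List.replicate N true) = A ^ N := by
      unfold W
      rw [List.map_replicate, List.prod_replicate]
      rfl
    rw [← h1]
    exact hle _ (by simp)
  by_cases hMpos : M ≤ 0
  · exact le_trans hrep (le_trans hMpos (trace_alt_pow_nonneg A m))
  push_neg at hMpos
  -- the set of maximizers
  set C : Finset (Fin N → Bool) :=
    Finset.univ.filter (fun g => Matrix.trace (W A (List.ofFn g)) = M) with hC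
  have hCne : C.Nonempty := ⟨gmax, by simp [hC, hM]⟩
  obtain ⟨gmin, hgminC, hgmin⟩ := Finset.exists_min_image C (fun g => D (List.ofFn g)) hCne
  set l₀ : List Bool := List.ofFn gmin with hl₀
  have hl₀len : l₀.length = N := by simp [hl₀]
  have hl₀tr : Matrix.trace (W A l₀) = M := by
    have := hgminC
    simp only [hC, Finset.mem_filter] at this
    exact this.2
  set d₀ := D l₀ with hd₀
  have hmin : ∀ l : List Bool, l.length = N → Matrix.trace (W A l) = M → d₀ ≤ D l := by
    intro l hl htr
    obtain ⟨g, rfl⟩ := exists_ofFn l hl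
    exact hgmin g (by simp [hC, htr])
  -- main claim : d₀ = 0
  have hd0 : d₀ = 0 := by
    by_contra hne
    have hd1 : 1 ≤ d₀ := Nat.one_le_iff_ne_zero.mpr hne
    -- find a word l' with trace M, defect d₀, length N, and last = head
    have step1 : ∃ l' : List Bool, l'.length = N ∧ Matrix.trace (W A l') = M ∧
        D l' = d₀ ∧ lastB l' = l'.headI := by
      obtain ⟨p, x, q, hpq⟩ := Dint_one_le (l₀ ++ [l₀.headI]) hd1
      rcases List.eq_nil_or_concat q with rfl | ⟨q', y, rfl⟩
      · -- pair at the very end : l₀ ends with x and headI = x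
        have h2 : l₀ ++ [l₀.headI] = (p ++ [x]) ++ [x] := by
          rw [hpq]; simp
        obtain ⟨h3, h4⟩ := List.append_inj' h2 rfl
        have hh : l₀.headI = x := by simpa using h4
        refine ⟨l₀, hl₀len, hl₀tr, rfl, ?_⟩
        rw [hh, h3, lastB_singleton_append]
      · -- pair inside l₀
        have h2 : l₀ ++ [l₀.headI] = (p ++ x :: x :: q') ++ [y] := by
          rw [hpq]; simp
        obtain ⟨h3, h4⟩ := List.append_inj' h2 rfl
        set u : List Bool := p ++ [x] with hu
        set v : List Bool := x :: q' with hv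
        have huv : l₀ = u ++ v := by rw [h3, hu, hv]; simp
        have hune : u ≠ [] := by simp [hu]
        have hvne : v ≠ [] := by simp [hv]
        refine ⟨v ++ u, ?_, ?_, ?_, ?_⟩
        · rw [List.length_append, Nat.add_comm, ← List.length_append, ← huv, hl₀len]
        · rw [W_append, Matrix.trace_mul_comm, ← W_append, ← huv, hl₀tr]
        · rw [← D_swap u v hune hvne, ← huv]
        · rw [lastB_append v u hune, hu, lastB_singleton_append, hv]
          rfl
    obtain ⟨l', hlen', htr', hD', hwrap'⟩ := step1
    -- split in halves
    set u' : List Bool := l'.take m with hu'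
    set v' : List Bool := l'.drop m with hv'
    have hml : m ≤ l'.length := by rw [hlen', hN]; omega
    have hulen : u'.length = m := by rw [hu', List.length_take]; omega
    have hvlen : v'.length = m := by rw [hv', List.length_drop, hlen', hN]; omega
    have hune : u' ≠ [] := by
      intro h; rw [h] at hulen; simp at hulen; omega
    have hvne : v' ≠ [] := by
      intro h; rw [h] at hvlen; simp at hvlen; omega
    have huv : l' = u' ++ v' := (List.take_append_drop m l').symm
    -- defect bookkeeping
    have hDform : D l' = Dint u' + Dint v' + J (lastB u') v'.headI + J (lastB v') u'.headI := by
      conv_lhs => rw [huv]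
      exact D_append u' v' hune hvne
    have hlast : lastB v' = lastB l' := by
      conv_rhs => rw [huv]
      rw [lastB_append u' v' hvne]
    have h5 : u'.headI = l'.headI := by
      conv_rhs => rw [huv]
      rw [headI_append u' v' hune]
    have hJ1 : J (lastB v') u'.headI = 1 := by
      rw [hlast, hwrap', ← h5]
      simp [J]
    have hab : Dint u' + Dint v' + 1 ≤ d₀ := by
      rw [← hD', hDform, hJ1]; omega
    -- Cauchy-Schwarz
    have hCS : M ^ 2 ≤ Matrix.trace (W A (u' ++ mirror u')) *
        Matrix.trace (W A (mirror v' ++ v')) := by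
      have h6 : W A (u' ++ mirror u') = W A u' * (W A u')ᵀ := by
        rw [W_append, W_mirror]
      have h7 : W A (mirror v' ++ v') = (W A v')ᵀ * W A v' := by
        rw [W_append, W_mirror]
      rw [h6, h7, ← htr']
      rw [huv, W_append]
      exact trace_CS _ _
    have hT1le : Matrix.trace (W A (u' ++ mirror u')) ≤ M :=
      hle _ (by rw [List.length_append, length_mirror, hulen]; omega)
    have hT2le : Matrix.trace (W A (mirror v' ++ v')) ≤ M :=
      hle _ (by rw [List.length_append, length_mirror, hvlen]; omega)
    have hT1nn : 0 ≤ Matrix.trace (W A (u' ++ mirror u')) := by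
      rw [W_append, W_mirror]; exact trace_mul_transpose_self_nonneg _
    have hT2nn : 0 ≤ Matrix.trace (W A (mirror v' ++ v')) := by
      rw [W_append, W_mirror, Matrix.trace_mul_comm]
      exact trace_mul_transpose_self_nonneg _
    have hT1 : Matrix.trace (W A (u' ++ mirror u')) = M := by nlinarith
    have hT2 : Matrix.trace (W A (mirror v' ++ v')) = M := by nlinarith
    have hd1' : d₀ ≤ 2 * Dint u' := by
      have := hmin (u' ++ mirror u')
        (by rw [List.length_append, length_mirror, hulen]; omega) hT1
      rwa [D_mirror_right u' hune] at this
    have hd2' : d₀ ≤ 2 * Dint v' := by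
      have := hmin (mirror v' ++ v')
        (by rw [List.length_append, length_mirror, hvlen]; omega) hT2
      rwa [D_mirror_left v' hvne] at this
    omega
  -- d₀ = 0 : the minimal maximizer is alternating
  have hDint0 : Dint l₀ = 0 := by
    have := Dint_prefix_le l₀ [l₀.headI]
    rw [← D] at this
    omega
  have halt : W A l₀ = (f A l₀.headI * f A (!l₀.headI)) ^ m :=
    W_alt l₀ A m (by rw [hl₀len, hN]) hDint0
  have hMt : M = Matrix.trace ((A * Aᵀ) ^ m) := by
    rw [← hl₀tr, halt]
    cases h : l₀.headI
    · show Matrix.trace ((f A false * f A true) ^ m) = _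
      show Matrix.trace ((Aᵀ * A) ^ m) = _
      rw [trace_pow_mul_comm]
    · show Matrix.trace ((f A true * f A false) ^ m) = _
      rfl
  rw [← hMt]
  exact hrep

end TraceWord

open Matrix
theorem trace_pow_le_trace_mul_transpose_pow {n : ℕ} (A : Matrix (Fin n) (Fin n) ℝ)
    (m : ℕ) :
    Matrix.trace (A ^ (2 * m)) ≤ Matrix.trace ((A * Aᵀ) ^ m) := by
  rcases Nat.eq_zero_or_pos m with rfl | hm
  · simp
  · exact TraceWord.main A m hm
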